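/- For any A > 0 and Q ∈ ℝ, the function κ(s) = A / (A²(s+Q)² + 1) satisfies the differential equation 4κ⁴ + 2κκ'' − 3(κ')² = 0. -/

import Mathlib

/-- For `A > 0`, `Q ∈ ℝ`, the function `κ(s) = A / (A²(s+Q)² + 1)`
satisfies `4κ⁴ + 2κκ'' − 3(κ')² = 0`. -/
theorem stmt_2 (A Q : ℝ) (hA : 0 < A) (κ : ℝ → ℝ)
    (hκ : κ = fun s => A / (A ^ 2 * (s + Q) ^ 2 + 1)) :
    ∀ s, 4 * (κ s) ^ 4 + 2 * κ s * deriv (deriv κ) s - 3 * (deriv κ s) ^ 2 = 0 := by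
  have hDpos : ∀ s : ℝ, 0 < A ^ 2 * (s + Q) ^ 2 + 1 := fun s => by positivity
  have hD : ∀ s : ℝ, A ^ 2 * (s + Q) ^ 2 + 1 ≠ 0 := fun s => (hDpos s).ne'
  have hden : ∀ s : ℝ, HasDerivAt (fun s : ℝ => A ^ 2 * (s + Q) ^ 2 + 1)
      (2 * A ^ 2 * (s + Q)) s := by
    intro s
    have : HasDerivAt (fun s : ℝ => s + Q) 1 s := (hasDerivAt_id s).add_const Q
    have := ((this.pow 2).const_mul (A ^ 2)).add_const 1
    exact this.congr_deriv (by ring)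
  have h1 : ∀ s : ℝ, HasDerivAt κ
      (-2 * A ^ 3 * (s + Q) / (A ^ 2 * (s + Q) ^ 2 + 1) ^ 2) s := by
    intro s
    rw [hκ]
    have := (hasDerivAt_const s A).div (hden s) (hD s)
    exact this.congr_deriv (by ring)
  have hd1 : deriv κ = fun s => -2 * A ^ 3 * (s + Q) / (A ^ 2 * (s + Q) ^ 2 + 1) ^ 2 :=
    funext fun s => (h1 s).deriv
  have h2 : ∀ s : ℝ, HasDerivAt (deriv κ)
      ((-2 * A ^ 3 * (A ^ 2 * (s + Q) ^ 2 + 1) + 8 * A ^ 5 * (s + Q) ^ 2)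
        / (A ^ 2 * (s + Q) ^ 2 + 1) ^ 3) s := by
    intro s
    rw [hd1]
    have hnum : HasDerivAt (fun s : ℝ => -2 * A ^ 3 * (s + Q)) (-2 * A ^ 3) s := by
      have : HasDerivAt (fun s : ℝ => s + Q) 1 s := (hasDerivAt_id s).add_const Q
      have := this.const_mul (-2 * A ^ 3)
      simpa using this
    have hden2 : HasDerivAt (fun s : ℝ => (A ^ 2 * (s + Q) ^ 2 + 1) ^ 2)
        (2 * (A ^ 2 * (s + Q) ^ 2 + 1) * (2 * A ^ 2 * (s + Q))) s := by
      have := (hden s).pow 2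
      exact this.congr_deriv (by ring)
    have := hnum.div hden2 (pow_ne_zero 2 (hD s))
    have h := hD s
    exact this.congr_deriv (by field_simp; ring)
  intro s
  rw [(h2 s).deriv, hd1, hκ]
  simp only
  have h := hD s
  field_simp
  ring
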